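/- Let Q be a 3×3 real matrix that is symmetric and has trace zero. Then there exist s ∈ ℝ and a unit vector n ∈ ℝ³ with Q = s(n⊗n − (1/3)Id) if and only if (tr(Q²))³ = 54·(det Q)². -/

import Mathlib

open Matrix in
lemma stmt2_algid (a b c : ℝ) (h : a + b + c = 0) :
    (a^2+b^2+c^2)^3 - 54*(a*b*c)^2 = 2*(a-b)^2*(b-c)^2*(a-c)^2 := by
  have hc : c = -a - b := by linarith
  subst hc; ring

open Matrix in
lemma stmt2_main_aux (Q U : Matrix (Fin 3) (Fin 3) ℝ) (m : ℝ) (k : Fin 3)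
    (hU : U * Uᵀ = 1)
    (hQ : ∀ a b, Q a b = ∑ x, (if x = k then -2*m else m) * U a x * U b x) :
    Q = (-3*m) • (Matrix.vecMulVec (fun a => U a k) (fun a => U a k)
      - (1 / 3 : ℝ) • (1 : Matrix (Fin 3) (Fin 3) ℝ)) := by
  ext a b
  have h1 : (U * Uᵀ) a b = (1 : Matrix (Fin 3) (Fin 3) ℝ) a b := by rw [hU]
  rw [Matrix.mul_apply] at h1
  simp only [Matrix.transpose_apply] at h1
  rw [hQ a b]
  have : ∀ x, (if x = k then -2*m else m) * U a x * U b x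
      = m * (U a x * U b x) + (if x = k then (-3*m) * (U a x * U b x) else 0) := by
    intro x; split <;> ring
  rw [Finset.sum_congr rfl (fun x _ => this x), Finset.sum_add_distrib, ← Finset.mul_sum,
    Finset.sum_ite_eq' _ k, h1]
  simp [Matrix.vecMulVec_apply, Matrix.smul_apply, Matrix.sub_apply, Matrix.one_apply]
  split <;> ring

open Matrix in
lemma stmt2_case_aux (Q U : Matrix (Fin 3) (Fin 3) ℝ) (d : Fin 3 → ℝ) (k : Fin 3)
    (hU1 : U * Uᵀ = 1) (hU2 : Uᵀ * U = 1)
    (hQ : Q = U * Matrix.diagonal d * Uᵀ)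
    (m : ℝ) (hd : ∀ x, d x = if x = k then -2*m else m) :
    ∃ s : ℝ, ∃ n : Fin 3 → ℝ, (∑ i, (n i) ^ 2) = 1 ∧
      Q = s • (Matrix.vecMulVec n n - (1 / 3 : ℝ) • (1 : Matrix (Fin 3) (Fin 3) ℝ)) := by
  refine ⟨-3*m, fun a => U a k, ?_, ?_⟩
  · have h1 : (Uᵀ * U) k k = (1 : Matrix (Fin 3) (Fin 3) ℝ) k k := by rw [hU2]
    rw [Matrix.mul_apply] at h1
    simp only [Matrix.transpose_apply, Matrix.one_apply_eq] at h1
    rw [← h1]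
    exact Finset.sum_congr rfl (fun i _ => by ring)
  · apply stmt2_main_aux Q U m k hU1
    intro a b
    rw [hQ, Matrix.mul_apply]
    refine Finset.sum_congr rfl (fun x _ => ?_)
    rw [Matrix.mul_diagonal, Matrix.transpose_apply, hd x]
    ring

open Matrix in
lemma stmt2_rev (Q : Matrix (Fin 3) (Fin 3) ℝ)
    (hsym : Q.IsSymm) (htr : Q.trace = 0)
    (hcond : ((Q * Q).trace) ^ 3 = 54 * (Q.det) ^ 2) :
    ∃ s : ℝ, ∃ n : Fin 3 → ℝ, (∑ i, (n i) ^ 2) = 1 ∧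
      Q = s • (Matrix.vecMulVec n n - (1 / 3 : ℝ) • (1 : Matrix (Fin 3) (Fin 3) ℝ)) := by
  have hherm : Q.IsHermitian := by
    have : Qᴴ = Qᵀ := by ext i j; simp [Matrix.conjTranspose_apply]
    rw [Matrix.IsHermitian, this]; exact hsym
  set U : Matrix (Fin 3) (Fin 3) ℝ := (hherm.eigenvectorUnitary : Matrix (Fin 3) (Fin 3) ℝ) with hUdef
  set d : Fin 3 → ℝ := hherm.eigenvalues with hddef
  have hstar : star U = Uᵀ := by ext i j; simp [Matrix.star_apply, Matrix.transpose_apply]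
  have hU1 : U * Uᵀ = 1 := by
    rw [← hstar]; exact (Matrix.mem_unitaryGroup_iff).mp hherm.eigenvectorUnitary.2
  have hU2 : Uᵀ * U = 1 := by
    rw [← hstar]; exact (Matrix.mem_unitaryGroup_iff').mp hherm.eigenvectorUnitary.2
  have hspec : Q = U * Matrix.diagonal d * Uᵀ := by
    have h := hherm.spectral_theorem
    rw [Unitary.conjStarAlgAut_apply] at h
    rw [← hstar]
    exact h
  have htrd : d 0 + d 1 + d 2 = 0 := by
    have : Q.trace = (Matrix.diagonal d).trace := by
      rw [hspec, Matrix.trace_mul_cycle, hU2, Matrix.one_mul]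
    rw [htr, Matrix.trace_diagonal, Fin.sum_univ_three] at this
    linarith
  have htr2 : (Q * Q).trace = d 0 ^ 2 + d 1 ^ 2 + d 2 ^ 2 := by
    have hQQ : Q * Q = U * Matrix.diagonal (fun i => d i * d i) * Uᵀ := by
      rw [hspec]
      rw [show U * Matrix.diagonal d * Uᵀ * (U * Matrix.diagonal d * Uᵀ)
        = U * (Matrix.diagonal d * (Uᵀ * U) * Matrix.diagonal d) * Uᵀ by
          simp only [Matrix.mul_assoc],
        hU2, Matrix.mul_one, Matrix.diagonal_mul_diagonal]
    rw [hQQ, Matrix.trace_mul_cycle, hU2, Matrix.one_mul,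
      Matrix.trace_diagonal, Fin.sum_univ_three]
    ring
  have hdet : Q.det = d 0 * d 1 * d 2 := by
    have := hherm.det_eq_prod_eigenvalues
    rw [this, Fin.prod_univ_three]; rfl
  rw [htr2, hdet] at hcond
  have key : (d 0 - d 1) ^ 2 * (d 1 - d 2) ^ 2 * (d 0 - d 2) ^ 2 = 0 := by
    have h := stmt2_algid (d 0) (d 1) (d 2) htrd
    linarith
  have key2 : (d 0 - d 1) * ((d 1 - d 2) * (d 0 - d 2)) = 0 :=
    sq_eq_zero_iff.mp (by linear_combination key)
  rcases mul_eq_zero.mp key2 with h | h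
  · refine stmt2_case_aux Q U d 2 hU1 hU2 hspec (d 0) (fun x => ?_)
    fin_cases x <;> simp <;> linarith
  rcases mul_eq_zero.mp h with h | h
  · refine stmt2_case_aux Q U d 0 hU1 hU2 hspec (d 1) (fun x => ?_)
    fin_cases x <;> simp <;> linarith
  · refine stmt2_case_aux Q U d 1 hU1 hU2 hspec (d 0) (fun x => ?_)
    fin_cases x <;> simp <;> linarith

/-- A symmetric traceless 3×3 real matrix `Q` has the form `s(n⊗n − (1/3)Id)`
for some `s : ℝ` and unit vector `n` iff `(tr(Q²))³ = 54 (det Q)²`. -/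
theorem stmt2 (Q : Matrix (Fin 3) (Fin 3) ℝ)
    (hsym : Q.IsSymm) (htr : Q.trace = 0) :
    (∃ s : ℝ, ∃ n : Fin 3 → ℝ, (∑ i, (n i) ^ 2) = 1 ∧
        Q = s • (Matrix.vecMulVec n n - (1 / 3 : ℝ) • (1 : Matrix (Fin 3) (Fin 3) ℝ))) ↔
      ((Q * Q).trace) ^ 3 = 54 * (Q.det) ^ 2 := by
  constructor
  · rintro ⟨s, n, hn, rfl⟩
    set Q := s • (Matrix.vecMulVec n n - (1 / 3 : ℝ) • (1 : Matrix (Fin 3) (Fin 3) ℝ)) with hQdef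
    have hn' : n 0 ^ 2 + n 1 ^ 2 + n 2 ^ 2 = 1 := by
      rw [← hn, Fin.sum_univ_three]
    have e01 : ((0:Fin 3) = 1) = False := by decide
    have e02 : ((0:Fin 3) = 2) = False := by decide
    have e10 : ((1:Fin 3) = 0) = False := by decide
    have e12 : ((1:Fin 3) = 2) = False := by decide
    have e20 : ((2:Fin 3) = 0) = False := by decide
    have e21 : ((2:Fin 3) = 1) = False := by decide
    have htrace : (Q * Q).trace = (2/3) * s^2 := by
      simp only [hQdef, Matrix.trace, Matrix.diag, Matrix.mul_apply, Fin.sum_univ_three,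
        Matrix.smul_apply, Matrix.sub_apply, Matrix.vecMulVec_apply, Matrix.one_apply,
        smul_eq_mul, e01, e02, e10, e12, e20, e21, if_true, if_false, ite_true, ite_false]
      norm_num
      linear_combination (s^2*(n 0^2+n 1^2+n 2^2) + s^2/3) * hn'
    have hdet : Q.det = (2/27) * s^3 := by
      rw [Matrix.det_fin_three]
      simp only [hQdef, Matrix.smul_apply, Matrix.sub_apply, Matrix.vecMulVec_apply,
        Matrix.one_apply, smul_eq_mul, e01, e02, e10, e12, e20, e21, if_true, if_false,
        ite_true, ite_false]
      norm_num
      linear_combination (s^3/9) * hn'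
    rw [htrace, hdet]; ring
  · exact stmt2_rev Q hsym htr
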